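/- Let λ > 1 and let φ : (0,∞) → [0,∞) be a convex function satisfying φ(λt) = φ(t)/λ for all t > 0. Then there exists a constant a ≥ 0 such that φ(t) ≤ a/t for all t > 0. -/

import Mathlib

theorem stmt_0 (lam : ℝ) (hlam : 1 < lam) (φ : ℝ → ℝ)
    (hconv : ConvexOn ℝ (Set.Ioi (0:ℝ)) φ)
    (hnonneg : ∀ t > (0:ℝ), 0 ≤ φ t)
    (hscal : ∀ t > (0:ℝ), φ (lam * t) = φ t / lam) :
    ∃ a : ℝ, 0 ≤ a ∧ ∀ t > (0:ℝ), φ t ≤ a / t := by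
  have hlam0 : (0:ℝ) < lam := lt_trans one_pos hlam
  -- scaling for integer powers
  have hzpow : ∀ n : ℤ, ∀ t > (0:ℝ), φ (lam ^ n * t) = φ t / lam ^ n := by
    intro n
    induction n using Int.induction_on with
    | zero => intro t ht; simp
    | succ n ih =>
      intro t ht
      have h1 : lam ^ ((n:ℤ) + 1) * t = lam * (lam ^ (n:ℤ) * t) := by
        rw [zpow_add_one₀ (ne_of_gt hlam0)]; ring
      have h2 : (0:ℝ) < lam ^ (n:ℤ) * t := mul_pos (zpow_pos hlam0 _) ht
      rw [h1, hscal _ h2, ih t ht, zpow_add_one₀ (ne_of_gt hlam0)]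
      field_simp
    | pred n ih =>
      intro t ht
      have key : φ (lam * (lam ^ (-(n:ℤ) - 1) * t)) = φ (lam ^ (-(n:ℤ) - 1) * t) / lam :=
        hscal _ (mul_pos (zpow_pos hlam0 _) ht)
      have h1 : lam * (lam ^ (-(n:ℤ) - 1) * t) = lam ^ (-(n:ℤ)) * t := by
        rw [show (-(n:ℤ)) = (-(n:ℤ) - 1) + 1 by ring, zpow_add_one₀ (ne_of_gt hlam0)]; ring
      rw [h1, ih t ht] at key
      have hne : lam ^ (-(n:ℤ) - 1) ≠ 0 := ne_of_gt (zpow_pos hlam0 _)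
      have : φ (lam ^ (-(n:ℤ) - 1) * t) = φ t / lam ^ (-(n:ℤ)) * lam := by
        field_simp at key ⊢; linarith [key]
      rw [this, show (-(n:ℤ)) = (-(n:ℤ) - 1) + 1 by ring, zpow_add_one₀ (ne_of_gt hlam0)]
      field_simp
      ring
  set M := max (φ 1) (φ lam) with hM
  have hM0 : 0 ≤ M := le_trans (hnonneg 1 one_pos) (le_max_left _ _)
  -- bound on [1, lam]
  have hbound : ∀ s ∈ Set.Icc (1:ℝ) lam, φ s ≤ M := by
    intro s hs
    have h1 : (1:ℝ) ∈ Set.Ioi (0:ℝ) := by norm_num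
    have h2 : lam ∈ Set.Ioi (0:ℝ) := hlam0
    have hseg : s ∈ segment ℝ (1:ℝ) lam := by
      rw [segment_eq_Icc (le_of_lt hlam)]; exact hs
    exact hconv.le_on_segment h1 h2 hseg
  refine ⟨lam * M, mul_nonneg (le_of_lt hlam0) hM0, ?_⟩
  intro t ht
  obtain ⟨n, hn1, hn2⟩ := exists_mem_Ico_zpow ht hlam
  have hpow : (0:ℝ) < lam ^ n := zpow_pos hlam0 _
  set s := t / lam ^ n with hs
  have hs1 : (1:ℝ) ≤ s := (one_le_div hpow).mpr hn1
  have hs2 : s ≤ lam := by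
    rw [div_le_iff₀ hpow]
    calc t ≤ lam ^ (n + 1) := le_of_lt hn2
    _ = lam * lam ^ n := by rw [zpow_add_one₀ (ne_of_gt hlam0)]; ring
  have hts : t = lam ^ n * s := by rw [hs]; field_simp
  have hs0 : (0:ℝ) < s := lt_of_lt_of_le one_pos hs1
  calc φ t = φ s / lam ^ n := by rw [hts]; exact hzpow n s hs0
  _ ≤ M / lam ^ n := by
      gcongr
      exact hbound s ⟨hs1, hs2⟩
  _ ≤ lam * M / t := by
      rw [div_le_div_iff₀ hpow ht]
      have : t ≤ lam * lam ^ n := by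
        calc t ≤ lam ^ (n+1) := le_of_lt hn2
        _ = lam * lam ^ n := by rw [zpow_add_one₀ (ne_of_gt hlam0)]; ring
      nlinarith
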